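/- arXiv:2402.14615 — 2 statements merged into one kernel-verified Lean document; each statement's English description precedes it below -/
import Mathlib

section
/- The mathematical entropy S = ∑_k (−ρ_k s_k)/(γ_k − 1), with s_k = ln(p_k) − γ_k ln(ρ_k) where p_k = (γ_k − 1)(E_k − |m_k|²/(2ρ_k) − |B|²/2), is a strictly convex function of the state variables (ρ_k, m_k, E_k, B) on the domain where all ρ_k > 0 and all p_k > 0, for any number of species N ≥ 1 with γ_k > 1. -/
/-- The state space of the modified multi-ion MHD system:
densities `ρ_k`, momenta `m_k = ρ_k v_k ∈ ℝ³`, modified energies `E_k`,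
and a shared magnetic field `B ∈ ℝ³`. -/
def MultiIonState (N : ℕ) :=
  (Fin N → ℝ) × (Fin N → Fin 3 → ℝ) × (Fin N → ℝ) × (Fin 3 → ℝ)

instance (N : ℕ) : AddCommGroup (MultiIonState N) := by
  unfold MultiIonState; infer_instance

noncomputable instance (N : ℕ) : Module ℝ (MultiIonState N) := by
  unfold MultiIonState; infer_instance

/-- The pressure `p_k = (γ_k − 1)(E_k − |m_k|²/(2ρ_k) − |B|²/2)`. -/
noncomputable def ionPressure {N : ℕ} (γ : Fin N → ℝ) (u : MultiIonState N)
    (k : Fin N) : ℝ :=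
  (γ k - 1) * (u.2.2.1 k - (∑ i, (u.2.1 k i) ^ 2) / (2 * u.1 k)
    - (∑ i, (u.2.2.2 i) ^ 2) / 2)

/-- The mathematical entropy `S = ∑_k −ρ_k s_k/(γ_k − 1)` with
`s_k = log p_k − γ_k log ρ_k`. -/
noncomputable def mathEntropy {N : ℕ} (γ : Fin N → ℝ) (u : MultiIonState N) : ℝ :=
  ∑ k, -(u.1 k * (Real.log (ionPressure γ u k) - γ k * Real.log (u.1 k)))
    / (γ k - 1)

section Aux

open Real

/-- Perspective of the square: cleared denominators form. -/
lemma persp_core (a b p q x y : ℝ) (ha : 0 < a) (hb : 0 < b) (hab : a + b = 1)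
    (hp : 0 < p) (hq : 0 < q) :
    (a*x+b*y)^2 * (p*q) ≤ (a*(x^2*q) + b*(y^2*p)) * (a*p+b*q) := by
  nlinarith [sq_nonneg (x*q - y*p), mul_pos ha hb, mul_pos hp hq,
    mul_pos (mul_pos ha hb) (mul_pos hp hq)]

lemma persp_core_lt (a b p q x y : ℝ) (ha : 0 < a) (hb : 0 < b) (hab : a + b = 1)
    (hp : 0 < p) (hq : 0 < q) (hne : x*q ≠ y*p) :
    (a*x+b*y)^2 * (p*q) < (a*(x^2*q) + b*(y^2*p)) * (a*p+b*q) := by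
  have h : 0 < (x*q - y*p)^2 :=
    lt_of_le_of_ne (sq_nonneg _) (Ne.symm (pow_ne_zero 2 (sub_ne_zero.mpr hne)))
  nlinarith [mul_pos ha hb, mul_pos hp hq, mul_pos (mul_pos ha hb) (mul_pos h hp)]

lemma persp_le (a b p q x y : ℝ) (ha : 0 < a) (hb : 0 < b) (hab : a + b = 1)
    (hp : 0 < p) (hq : 0 < q) :
    (a*x+b*y)^2/(a*p+b*q) ≤ a*(x^2/p) + b*(y^2/q) := by
  rw [div_le_iff₀ (by positivity)]
  have e : a*(x^2/p) + b*(y^2/q) = (a*(x^2*q) + b*(y^2*p)) / (p*q) := by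
    field_simp
  rw [e, div_mul_eq_mul_div, le_div_iff₀ (by positivity)]
  exact persp_core a b p q x y ha hb hab hp hq

lemma persp_lt (a b p q x y : ℝ) (ha : 0 < a) (hb : 0 < b) (hab : a + b = 1)
    (hp : 0 < p) (hq : 0 < q) (hne : x*q ≠ y*p) :
    (a*x+b*y)^2/(a*p+b*q) < a*(x^2/p) + b*(y^2/q) := by
  rw [div_lt_iff₀ (by positivity)]
  have e : a*(x^2/p) + b*(y^2/q) = (a*(x^2*q) + b*(y^2*p)) / (p*q) := by
    field_simp
  rw [e, div_mul_eq_mul_div, lt_div_iff₀ (by positivity)]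
  exact persp_core_lt a b p q x y ha hb hab hp hq hne

lemma sq_comb_le (a b x y : ℝ) (ha : 0 < a) (hb : 0 < b) (hab : a + b = 1) :
    (a*x+b*y)^2 ≤ a*x^2 + b*y^2 := by nlinarith [sq_nonneg (x-y), mul_pos ha hb]

lemma sq_comb_lt (a b x y : ℝ) (ha : 0 < a) (hb : 0 < b) (hab : a + b = 1)
    (hne : x ≠ y) : (a*x+b*y)^2 < a*x^2 + b*y^2 := by
  have h : 0 < (x-y)^2 :=
    lt_of_le_of_ne (sq_nonneg _) (Ne.symm (pow_ne_zero 2 (sub_ne_zero.mpr hne)))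
  nlinarith [mul_pos ha hb]

/-- The log-sum inequality, with its strict version. -/
lemma logsum_aux (a b x1 y1 x2 y2 : ℝ) (ha : 0 < a) (hb : 0 < b) (hab : a + b = 1)
    (hx1 : 0 < x1) (hy1 : 0 < y1) (hx2 : 0 < x2) (hy2 : 0 < y2) :
    ((a*x1+b*x2) * Real.log ((a*x1+b*x2)/(a*y1+b*y2))
      ≤ a*(x1*Real.log (x1/y1)) + b*(x2*Real.log (x2/y2))) ∧
    (x1*y2 ≠ x2*y1 →
      (a*x1+b*x2) * Real.log ((a*x1+b*x2)/(a*y1+b*y2))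
        < a*(x1*Real.log (x1/y1)) + b*(x2*Real.log (x2/y2))) := by
  have hY : 0 < a*y1 + b*y2 := by positivity
  set Y := a*y1 + b*y2 with hYdef
  have hw1 : 0 < a*y1/Y := by positivity
  have hw2 : 0 < b*y2/Y := by positivity
  have hwsum : a*y1/Y + b*y2/Y = 1 := by field_simp; exact hYdef.symm
  have ht1 : (0:ℝ) ≤ x1/y1 := by positivity
  have ht2 : (0:ℝ) ≤ x2/y2 := by positivity
  have hcomb : (a*y1/Y) • (x1/y1) + (b*y2/Y) • (x2/y2) = (a*x1+b*x2)/Y := by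
    simp only [smul_eq_mul]
    field_simp
  have key : ∀ (X : ℝ), ((a*y1/Y) * ((x1/y1) * Real.log (x1/y1))
      + (b*y2/Y) * ((x2/y2) * Real.log (x2/y2))) = X →
      Y * X = a*(x1*Real.log (x1/y1)) + b*(x2*Real.log (x2/y2)) := by
    intro X hX
    rw [← hX]
    field_simp
  constructor
  · have h := Real.convexOn_mul_log.2 (Set.mem_Ici.mpr ht1) (Set.mem_Ici.mpr ht2)
      hw1.le hw2.le hwsum
    rw [hcomb] at h
    simp only [smul_eq_mul] at h
    have h2 := mul_le_mul_of_nonneg_left h hY.le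
    rw [key _ rfl] at h2
    calc (a*x1+b*x2) * Real.log ((a*x1+b*x2)/Y)
        = Y * ((a*x1+b*x2)/Y * Real.log ((a*x1+b*x2)/Y)) := by
          field_simp
      _ ≤ _ := h2
  · intro hne
    have htne : x1/y1 ≠ x2/y2 := by
      intro h
      exact hne ((div_eq_div_iff hy1.ne' hy2.ne').mp h)
    have h := Real.strictConvexOn_mul_log.2 (Set.mem_Ici.mpr ht1) (Set.mem_Ici.mpr ht2)
      htne hw1 hw2 hwsum
    rw [hcomb] at h
    simp only [smul_eq_mul] at h
    have h2 := mul_lt_mul_of_pos_left h hY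
    rw [key _ rfl] at h2
    calc (a*x1+b*x2) * Real.log ((a*x1+b*x2)/Y)
        = Y * ((a*x1+b*x2)/Y * Real.log ((a*x1+b*x2)/Y)) := by
          field_simp
      _ < _ := h2

/-- The per-species entropy core function is strictly convex
(`εm` being an over-estimate of the combination is allowed since the
function decreases in `ε`). -/
lemma species_lt (γk L a b ρ1 ρ2 ε1 ε2 εm : ℝ) (hγ : 1 < γk)
    (ha : 0 < a) (hb : 0 < b) (hab : a + b = 1)
    (hρ1 : 0 < ρ1) (hρ2 : 0 < ρ2) (hε1 : 0 < ε1) (hε2 : 0 < ε2)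
    (hεm : a*ε1 + b*ε2 ≤ εm)
    (hstrict : ρ1 ≠ ρ2 ∨ ε1 ≠ ε2 ∨ a*ε1 + b*ε2 < εm) :
    γk*((a*ρ1+b*ρ2)*Real.log (a*ρ1+b*ρ2)) - (a*ρ1+b*ρ2)*L
        - (a*ρ1+b*ρ2)*Real.log εm
      < a*(γk*(ρ1*Real.log ρ1) - ρ1*L - ρ1*Real.log ε1)
        + b*(γk*(ρ2*Real.log ρ2) - ρ2*L - ρ2*Real.log ε2) := by
  have hg : (0:ℝ) < γk - 1 := by linarith
  have hρm : 0 < a*ρ1+b*ρ2 := by positivity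
  have he' : 0 < a*ε1+b*ε2 := by positivity
  have hεm' : 0 < εm := lt_of_lt_of_le he' hεm
  have A_le : (a*ρ1+b*ρ2)*Real.log (a*ρ1+b*ρ2)
      ≤ a*(ρ1*Real.log ρ1) + b*(ρ2*Real.log ρ2) := by
    have := Real.convexOn_mul_log.2 (Set.mem_Ici.mpr hρ1.le) (Set.mem_Ici.mpr hρ2.le)
      ha.le hb.le hab
    simpa using this
  have B_le := (logsum_aux a b ρ1 ε1 ρ2 ε2 ha hb hab hρ1 hε1 hρ2 hε2).1
  have Cdiv : (a*ρ1+b*ρ2)/εm ≤ (a*ρ1+b*ρ2)/(a*ε1+b*ε2) := by gcongr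
  have C_le : (a*ρ1+b*ρ2)*Real.log ((a*ρ1+b*ρ2)/εm)
      ≤ (a*ρ1+b*ρ2)*Real.log ((a*ρ1+b*ρ2)/(a*ε1+b*ε2)) :=
    mul_le_mul_of_nonneg_left (Real.log_le_log (by positivity) Cdiv) hρm.le
  have split : ∀ ρ ε : ℝ, 0 < ρ → 0 < ε →
      γk*(ρ*Real.log ρ) - ρ*L - ρ*Real.log ε
        = (γk-1)*(ρ*Real.log ρ) + ρ*Real.log (ρ/ε) - ρ*L := by
    intro ρ ε h1 h2
    rw [Real.log_div h1.ne' h2.ne']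
    ring
  rw [split _ _ hρm hεm', split _ _ hρ1 hε1, split _ _ hρ2 hε2]
  rcases ne_or_eq ρ1 ρ2 with hne | heq
  · have A_lt : (a*ρ1+b*ρ2)*Real.log (a*ρ1+b*ρ2)
        < a*(ρ1*Real.log ρ1) + b*(ρ2*Real.log ρ2) := by
      have := Real.strictConvexOn_mul_log.2 (Set.mem_Ici.mpr hρ1.le)
        (Set.mem_Ici.mpr hρ2.le) hne ha hb hab
      simpa using this
    have hA := mul_lt_mul_of_pos_left A_lt hg
    have hBC := C_le.trans B_le
    nlinarith [hA, hBC]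
  · subst heq
    rcases hstrict with h | h | h
    · exact absurd rfl h
    · have B_lt := (logsum_aux a b ρ1 ε1 ρ1 ε2 ha hb hab hρ1 hε1 hρ2 hε2).2
        (fun hc => h ((mul_left_cancel₀ hρ1.ne' hc).symm))
      have hA := mul_le_mul_of_nonneg_left A_le hg.le
      have hBC := lt_of_le_of_lt C_le B_lt
      nlinarith [hA, hBC]
    · have Cdiv' : (a*ρ1+b*ρ1)/εm < (a*ρ1+b*ρ1)/(a*ε1+b*ε2) := by gcongr
      have C_lt : (a*ρ1+b*ρ1)*Real.log ((a*ρ1+b*ρ1)/εm)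
          < (a*ρ1+b*ρ1)*Real.log ((a*ρ1+b*ρ1)/(a*ε1+b*ε2)) :=
        mul_lt_mul_of_pos_left (Real.log_lt_log (by positivity) Cdiv') hρm
      have hA := mul_le_mul_of_nonneg_left A_le hg.le
      have hBC := lt_of_lt_of_le C_lt B_le
      nlinarith [hA, hBC]

lemma species_le (γk L a b ρ1 ρ2 ε1 ε2 εm : ℝ) (hγ : 1 < γk)
    (ha : 0 < a) (hb : 0 < b) (hab : a + b = 1)
    (hρ1 : 0 < ρ1) (hρ2 : 0 < ρ2) (hε1 : 0 < ε1) (hε2 : 0 < ε2)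
    (hεm : a*ε1 + b*ε2 ≤ εm) :
    γk*((a*ρ1+b*ρ2)*Real.log (a*ρ1+b*ρ2)) - (a*ρ1+b*ρ2)*L
        - (a*ρ1+b*ρ2)*Real.log εm
      ≤ a*(γk*(ρ1*Real.log ρ1) - ρ1*L - ρ1*Real.log ε1)
        + b*(γk*(ρ2*Real.log ρ2) - ρ2*L - ρ2*Real.log ε2) := by
  by_cases hs : ρ1 ≠ ρ2 ∨ ε1 ≠ ε2 ∨ a*ε1 + b*ε2 < εm
  · exact (species_lt γk L a b ρ1 ρ2 ε1 ε2 εm hγ ha hb hab hρ1 hρ2 hε1 hε2 hεm hs).le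
  · push_neg at hs
    obtain ⟨h1, h2, h3⟩ := hs
    have hεmeq : εm = a*ε1 + b*ε2 := le_antisymm h3 hεm
    subst h1; subst h2
    have e1 : a*ρ1 + b*ρ1 = ρ1 := by rw [← add_mul, hab, one_mul]
    have e2 : a*ε1 + b*ε1 = ε1 := by rw [← add_mul, hab, one_mul]
    rw [hεmeq, e1, e2]
    have : a*(γk*(ρ1*Real.log ρ1) - ρ1*L - ρ1*Real.log ε1)
        + b*(γk*(ρ1*Real.log ρ1) - ρ1*L - ρ1*Real.log ε1)
        = (a+b)*(γk*(ρ1*Real.log ρ1) - ρ1*L - ρ1*Real.log ε1) := by ring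
    rw [this, hab, one_mul]

/-- Internal energy density of species `k`. -/
noncomputable def eps {N : ℕ} (u : MultiIonState N) (k : Fin N) : ℝ :=
  u.2.2.1 k - (∑ i, (u.2.1 k i) ^ 2) / (2 * u.1 k) - (∑ i, (u.2.2.2 i) ^ 2) / 2

lemma ionPressure_eq {N : ℕ} (γ : Fin N → ℝ) (u : MultiIonState N) (k : Fin N) :
    ionPressure γ u k = (γ k - 1) * eps u k := rfl

lemma eps_pos {N : ℕ} {γ : Fin N → ℝ} {u : MultiIonState N} {k : Fin N}
    (hγ : 1 < γ k) (hp : 0 < ionPressure γ u k) : 0 < eps u k := by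
  have hg : γ k - 1 ≠ 0 := by linarith
  have : eps u k = ionPressure γ u k / (γ k - 1) := by
    rw [ionPressure_eq, mul_div_cancel_left₀ _ hg]
  rw [this]
  exact div_pos hp (by linarith)

lemma comp1 {N : ℕ} (a b : ℝ) (u v : MultiIonState N) (k : Fin N) :
    (a • u + b • v).1 k = a * u.1 k + b * v.1 k := rfl
lemma comp2 {N : ℕ} (a b : ℝ) (u v : MultiIonState N) (k : Fin N) (i : Fin 3) :
    (a • u + b • v).2.1 k i = a * u.2.1 k i + b * v.2.1 k i := rfl
lemma comp3 {N : ℕ} (a b : ℝ) (u v : MultiIonState N) (k : Fin N) :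
    (a • u + b • v).2.2.1 k = a * u.2.2.1 k + b * v.2.2.1 k := rfl
lemma comp4 {N : ℕ} (a b : ℝ) (u v : MultiIonState N) (i : Fin 3) :
    (a • u + b • v).2.2.2 i = a * u.2.2.2 i + b * v.2.2.2 i := rfl

lemma momentum_le {N : ℕ} (a b : ℝ) (u v : MultiIonState N) (k : Fin N)
    (ha : 0 < a) (hb : 0 < b) (hab : a + b = 1)
    (hu : 0 < u.1 k) (hv : 0 < v.1 k) :
    (∑ i, (a * u.2.1 k i + b * v.2.1 k i)^2) / (2 * (a * u.1 k + b * v.1 k))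
      ≤ a * ((∑ i, (u.2.1 k i)^2) / (2 * u.1 k))
        + b * ((∑ i, (v.2.1 k i)^2) / (2 * v.1 k)) := by
  have e2 : 2*(a*u.1 k + b*v.1 k) = a*(2*u.1 k) + b*(2*v.1 k) := by ring
  rw [e2, Finset.sum_div]
  calc ∑ i, (a * u.2.1 k i + b * v.2.1 k i)^2 / (a*(2*u.1 k) + b*(2*v.1 k))
      ≤ ∑ i : Fin 3, (a * ((u.2.1 k i)^2/(2*u.1 k)) + b * ((v.2.1 k i)^2/(2*v.1 k))) :=
        Finset.sum_le_sum fun i _ => persp_le a b (2*u.1 k) (2*v.1 k) _ _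
          ha hb hab (by positivity) (by positivity)
    _ = a * ((∑ i, (u.2.1 k i)^2) / (2 * u.1 k))
        + b * ((∑ i, (v.2.1 k i)^2) / (2 * v.1 k)) := by
        rw [Finset.sum_add_distrib, ← Finset.mul_sum, ← Finset.mul_sum,
          ← Finset.sum_div, ← Finset.sum_div]

lemma momentum_lt {N : ℕ} (a b : ℝ) (u v : MultiIonState N) (k : Fin N)
    (ha : 0 < a) (hb : 0 < b) (hab : a + b = 1)
    (hu : 0 < u.1 k) (hv : 0 < v.1 k) (hρ : u.1 k = v.1 k)
    (hne : ∃ i, u.2.1 k i ≠ v.2.1 k i) :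
    (∑ i, (a * u.2.1 k i + b * v.2.1 k i)^2) / (2 * (a * u.1 k + b * v.1 k))
      < a * ((∑ i, (u.2.1 k i)^2) / (2 * u.1 k))
        + b * ((∑ i, (v.2.1 k i)^2) / (2 * v.1 k)) := by
  obtain ⟨i0, hi0⟩ := hne
  have e2 : 2*(a*u.1 k + b*v.1 k) = a*(2*u.1 k) + b*(2*v.1 k) := by ring
  rw [e2, Finset.sum_div]
  calc ∑ i, (a * u.2.1 k i + b * v.2.1 k i)^2 / (a*(2*u.1 k) + b*(2*v.1 k))
      < ∑ i : Fin 3, (a * ((u.2.1 k i)^2/(2*u.1 k)) + b * ((v.2.1 k i)^2/(2*v.1 k))) := by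
        refine Finset.sum_lt_sum (fun i _ => (persp_le a b (2*u.1 k) (2*v.1 k) _ _
          ha hb hab (by positivity) (by positivity))) ⟨i0, Finset.mem_univ _, ?_⟩
        refine persp_lt a b (2*u.1 k) (2*v.1 k) _ _ ha hb hab
          (by positivity) (by positivity) ?_
        rw [hρ]
        exact fun hc => hi0 (mul_right_cancel₀ (by positivity) hc)
    _ = a * ((∑ i, (u.2.1 k i)^2) / (2 * u.1 k))
        + b * ((∑ i, (v.2.1 k i)^2) / (2 * v.1 k)) := by
        rw [Finset.sum_add_distrib, ← Finset.mul_sum, ← Finset.mul_sum,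
          ← Finset.sum_div, ← Finset.sum_div]

lemma mag_le {N : ℕ} (a b : ℝ) (u v : MultiIonState N)
    (ha : 0 < a) (hb : 0 < b) (hab : a + b = 1) :
    (∑ i, (a * u.2.2.2 i + b * v.2.2.2 i)^2) / 2
      ≤ a * ((∑ i, (u.2.2.2 i)^2) / 2) + b * ((∑ i, (v.2.2.2 i)^2) / 2) := by
  have h : (∑ i, (a * u.2.2.2 i + b * v.2.2.2 i)^2)
      ≤ a * (∑ i, (u.2.2.2 i)^2) + b * (∑ i, (v.2.2.2 i)^2) := by
    rw [Finset.mul_sum, Finset.mul_sum, ← Finset.sum_add_distrib]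
    exact Finset.sum_le_sum fun i _ => sq_comb_le a b _ _ ha hb hab
  linarith

lemma mag_lt {N : ℕ} (a b : ℝ) (u v : MultiIonState N)
    (ha : 0 < a) (hb : 0 < b) (hab : a + b = 1)
    (hne : ∃ i, u.2.2.2 i ≠ v.2.2.2 i) :
    (∑ i, (a * u.2.2.2 i + b * v.2.2.2 i)^2) / 2
      < a * ((∑ i, (u.2.2.2 i)^2) / 2) + b * ((∑ i, (v.2.2.2 i)^2) / 2) := by
  obtain ⟨i0, hi0⟩ := hne
  have h : (∑ i, (a * u.2.2.2 i + b * v.2.2.2 i)^2)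
      < a * (∑ i, (u.2.2.2 i)^2) + b * (∑ i, (v.2.2.2 i)^2) := by
    rw [Finset.mul_sum, Finset.mul_sum, ← Finset.sum_add_distrib]
    exact Finset.sum_lt_sum (fun i _ => sq_comb_le a b _ _ ha hb hab)
      ⟨i0, Finset.mem_univ _, sq_comb_lt a b _ _ ha hb hab hi0⟩
  linarith

lemma eps_concave {N : ℕ} (a b : ℝ) (u v : MultiIonState N) (k : Fin N)
    (ha : 0 < a) (hb : 0 < b) (hab : a + b = 1)
    (hu : 0 < u.1 k) (hv : 0 < v.1 k) :
    a * eps u k + b * eps v k ≤ eps (a • u + b • v) k := by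
  have hM := momentum_le a b u v k ha hb hab hu hv
  have hB := mag_le a b u v ha hb hab
  unfold eps
  simp only [comp1, comp2, comp3, comp4]
  linarith

lemma eps_concave_strict {N : ℕ} (a b : ℝ) (u v : MultiIonState N) (k : Fin N)
    (ha : 0 < a) (hb : 0 < b) (hab : a + b = 1)
    (hu : 0 < u.1 k) (hv : 0 < v.1 k) (hρ : u.1 k = v.1 k)
    (hne : (∃ i, u.2.1 k i ≠ v.2.1 k i) ∨ (∃ i, u.2.2.2 i ≠ v.2.2.2 i)) :
    a * eps u k + b * eps v k < eps (a • u + b • v) k := by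
  unfold eps
  simp only [comp1, comp2, comp3, comp4]
  rcases hne with h | h
  · have hM := momentum_lt a b u v k ha hb hab hu hv hρ h
    have hB := mag_le a b u v ha hb hab
    linarith
  · have hM := momentum_le a b u v k ha hb hab hu hv
    have hB := mag_lt a b u v ha hb hab h
    linarith

/-- Per-species term inequality, strict version. -/
lemma term_lt {N : ℕ} (γ : Fin N → ℝ) (hγ : ∀ k, 1 < γ k)
    (u v : MultiIonState N) (k : Fin N) (a b : ℝ)
    (ha : 0 < a) (hb : 0 < b) (hab : a + b = 1)
    (hρu : 0 < u.1 k) (hρv : 0 < v.1 k)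
    (hεu : 0 < eps u k) (hεv : 0 < eps v k)
    (hstrict : u.1 k ≠ v.1 k ∨ eps u k ≠ eps v k
      ∨ a * eps u k + b * eps v k < eps (a • u + b • v) k) :
    -((a • u + b • v).1 k * (Real.log (ionPressure γ (a • u + b • v) k)
        - γ k * Real.log ((a • u + b • v).1 k))) / (γ k - 1)
      < a * (-(u.1 k * (Real.log (ionPressure γ u k) - γ k * Real.log (u.1 k)))
          / (γ k - 1))
        + b * (-(v.1 k * (Real.log (ionPressure γ v k) - γ k * Real.log (v.1 k)))
          / (γ k - 1)) := by
  have hg : (0:ℝ) < γ k - 1 := by linarith [hγ k]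
  have hεw : 0 < eps (a • u + b • v) k :=
    lt_of_lt_of_le (by positivity) (eps_concave a b u v k ha hb hab hρu hρv)
  have texp : ∀ w : MultiIonState N, 0 < w.1 k → 0 < eps w k →
      -(w.1 k * (Real.log (ionPressure γ w k) - γ k * Real.log (w.1 k))) / (γ k - 1)
      = (γ k * (w.1 k * Real.log (w.1 k)) - w.1 k * Real.log (γ k - 1)
          - w.1 k * Real.log (eps w k)) / (γ k - 1) := by
    intro w h1 h2
    rw [ionPressure_eq, Real.log_mul (by linarith) h2.ne']
    ring
  rw [texp u hρu hεu, texp v hρv hεv,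
    texp _ (by rw [comp1]; positivity) hεw, comp1]
  have hsp := species_lt (γ k) (Real.log (γ k - 1)) a b (u.1 k) (v.1 k)
    (eps u k) (eps v k) (eps (a • u + b • v) k) (hγ k) ha hb hab hρu hρv hεu hεv
    (eps_concave a b u v k ha hb hab hρu hρv) hstrict
  calc (γ k * ((a * u.1 k + b * v.1 k) * Real.log (a * u.1 k + b * v.1 k))
        - (a * u.1 k + b * v.1 k) * Real.log (γ k - 1)
        - (a * u.1 k + b * v.1 k) * Real.log (eps (a • u + b • v) k)) / (γ k - 1)
      < (a * (γ k * (u.1 k * Real.log (u.1 k)) - u.1 k * Real.log (γ k - 1)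
            - u.1 k * Real.log (eps u k))
         + b * (γ k * (v.1 k * Real.log (v.1 k)) - v.1 k * Real.log (γ k - 1)
            - v.1 k * Real.log (eps v k))) / (γ k - 1) := by
        exact (div_lt_div_iff_of_pos_right hg).mpr hsp
    _ = _ := by ring


/-- Per-species term inequality, non-strict version. -/
lemma term_le {N : ℕ} (γ : Fin N → ℝ) (hγ : ∀ k, 1 < γ k)
    (u v : MultiIonState N) (k : Fin N) (a b : ℝ)
    (ha : 0 < a) (hb : 0 < b) (hab : a + b = 1)
    (hρu : 0 < u.1 k) (hρv : 0 < v.1 k)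
    (hεu : 0 < eps u k) (hεv : 0 < eps v k) :
    -((a • u + b • v).1 k * (Real.log (ionPressure γ (a • u + b • v) k)
        - γ k * Real.log ((a • u + b • v).1 k))) / (γ k - 1)
      ≤ a * (-(u.1 k * (Real.log (ionPressure γ u k) - γ k * Real.log (u.1 k)))
          / (γ k - 1))
        + b * (-(v.1 k * (Real.log (ionPressure γ v k) - γ k * Real.log (v.1 k)))
          / (γ k - 1)) := by
  have hg : (0:ℝ) < γ k - 1 := by linarith [hγ k]
  have hεw : 0 < eps (a • u + b • v) k :=
    lt_of_lt_of_le (by positivity) (eps_concave a b u v k ha hb hab hρu hρv)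
  have texp : ∀ w : MultiIonState N, 0 < w.1 k → 0 < eps w k →
      -(w.1 k * (Real.log (ionPressure γ w k) - γ k * Real.log (w.1 k))) / (γ k - 1)
      = (γ k * (w.1 k * Real.log (w.1 k)) - w.1 k * Real.log (γ k - 1)
          - w.1 k * Real.log (eps w k)) / (γ k - 1) := by
    intro w h1 h2
    rw [ionPressure_eq, Real.log_mul (by linarith) h2.ne']
    ring
  rw [texp u hρu hεu, texp v hρv hεv,
    texp _ (by rw [comp1]; positivity) hεw, comp1]
  have hsp := species_le (γ k) (Real.log (γ k - 1)) a b (u.1 k) (v.1 k)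
    (eps u k) (eps v k) (eps (a • u + b • v) k) (hγ k) ha hb hab hρu hρv hεu hεv
    (eps_concave a b u v k ha hb hab hρu hρv)
  calc (γ k * ((a * u.1 k + b * v.1 k) * Real.log (a * u.1 k + b * v.1 k))
        - (a * u.1 k + b * v.1 k) * Real.log (γ k - 1)
        - (a * u.1 k + b * v.1 k) * Real.log (eps (a • u + b • v) k)) / (γ k - 1)
      ≤ (a * (γ k * (u.1 k * Real.log (u.1 k)) - u.1 k * Real.log (γ k - 1)
            - u.1 k * Real.log (eps u k))
         + b * (γ k * (v.1 k * Real.log (v.1 k)) - v.1 k * Real.log (γ k - 1)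
            - v.1 k * Real.log (eps v k))) / (γ k - 1) := by
        exact (div_le_div_iff_of_pos_right hg).mpr hsp
    _ = _ := by ring

end Aux

/-- The mathematical entropy `S` is strictly convex with respect to the state
variables `(ρ_k, m_k, E_k, B)` on the domain where all densities and pressures
are positive, for any number of species `N ≥ 1` and heat capacity ratios
`γ_k > 1`. -/
theorem mathEntropy_strictConvexOn (N : ℕ) (hN : 1 ≤ N) (γ : Fin N → ℝ)
    (hγ : ∀ k, 1 < γ k) :
    StrictConvexOn ℝ
      {u : MultiIonState N | (∀ k, 0 < u.1 k) ∧ ∀ k, 0 < ionPressure γ u k}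
      (mathEntropy γ) := by
  constructor
  · -- convexity of the domain
    intro u hu v hv a b ha hb hab
    rcases eq_or_lt_of_le ha with ha0 | ha'
    · have hb1 : b = 1 := by linarith
      have : a • u + b • v = v := by rw [← ha0, hb1, zero_smul, one_smul, zero_add]
      rw [this]; exact hv
    rcases eq_or_lt_of_le hb with hb0 | hb'
    · have ha1 : a = 1 := by linarith
      have : a • u + b • v = u := by rw [← hb0, ha1, one_smul, zero_smul, add_zero]
      rw [this]; exact hu
    have hρ : ∀ k, 0 < (a • u + b • v).1 k := by
      intro k
      rw [comp1]
      exact add_pos (mul_pos ha' (hu.1 k)) (mul_pos hb' (hv.1 k))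
    refine ⟨hρ, fun k => ?_⟩
    rw [ionPressure_eq]
    refine mul_pos (by linarith [hγ k]) ?_
    have hεu : 0 < eps u k := eps_pos (hγ k) (hu.2 k)
    have hεv : 0 < eps v k := eps_pos (hγ k) (hv.2 k)
    exact lt_of_lt_of_le (by positivity)
      (eps_concave a b u v k ha' hb' hab (hu.1 k) (hv.1 k))
  · -- strict convexity
    intro u hu v hv huv a b ha hb hab
    obtain ⟨huρ, hup⟩ := hu
    obtain ⟨hvρ, hvp⟩ := hv
    have hεu : ∀ k, 0 < eps u k := fun k => eps_pos (hγ k) (hup k)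
    have hεv : ∀ k, 0 < eps v k := fun k => eps_pos (hγ k) (hvp k)
    have hle : ∀ k : Fin N,
        -((a • u + b • v).1 k * (Real.log (ionPressure γ (a • u + b • v) k)
            - γ k * Real.log ((a • u + b • v).1 k))) / (γ k - 1)
          ≤ a * (-(u.1 k * (Real.log (ionPressure γ u k)
              - γ k * Real.log (u.1 k))) / (γ k - 1))
            + b * (-(v.1 k * (Real.log (ionPressure γ v k)
              - γ k * Real.log (v.1 k))) / (γ k - 1)) :=
      fun k => term_le γ hγ u v k a b ha hb hab (huρ k) (hvρ k) (hεu k) (hεv k)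
    have hstrict : ∃ k : Fin N,
        -((a • u + b • v).1 k * (Real.log (ionPressure γ (a • u + b • v) k)
            - γ k * Real.log ((a • u + b • v).1 k))) / (γ k - 1)
          < a * (-(u.1 k * (Real.log (ionPressure γ u k)
              - γ k * Real.log (u.1 k))) / (γ k - 1))
            + b * (-(v.1 k * (Real.log (ionPressure γ v k)
              - γ k * Real.log (v.1 k))) / (γ k - 1)) := by
      by_cases h1 : u.1 = v.1
      · by_cases h2 : ∀ k, eps u k = eps v k
        · by_cases h3 : u.2.1 = v.2.1
          · by_cases h4 : u.2.2.2 = v.2.2.2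
            · exfalso
              apply huv
              have h5 : u.2.2.1 = v.2.2.1 := by
                funext k
                have hu' : u.2.2.1 k = eps u k + (∑ i, (u.2.1 k i)^2)/(2*u.1 k)
                    + (∑ i, (u.2.2.2 i)^2)/2 := by unfold eps; ring
                have hv' : v.2.2.1 k = eps v k + (∑ i, (v.2.1 k i)^2)/(2*v.1 k)
                    + (∑ i, (v.2.2.2 i)^2)/2 := by unfold eps; ring
                rw [hu', hv', h2 k, h1, h3, h4]
              exact Prod.ext h1 (Prod.ext h3 (Prod.ext h5 h4))
            · -- magnetic fields differ
              refine ⟨⟨0, hN⟩, term_lt γ hγ u v ⟨0, hN⟩ a b ha hb hab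
                (huρ _) (hvρ _) (hεu _) (hεv _) (Or.inr (Or.inr ?_))⟩
              exact eps_concave_strict a b u v ⟨0, hN⟩ ha hb hab (huρ _) (hvρ _)
                (congrFun h1 _) (Or.inr (Function.ne_iff.mp h4))
          · -- momenta differ at some species
            obtain ⟨k, hk⟩ := Function.ne_iff.mp h3
            refine ⟨k, term_lt γ hγ u v k a b ha hb hab
              (huρ k) (hvρ k) (hεu k) (hεv k) (Or.inr (Or.inr ?_))⟩
            exact eps_concave_strict a b u v k ha hb hab (huρ k) (hvρ k)
              (congrFun h1 k) (Or.inl (Function.ne_iff.mp hk))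
        · push_neg at h2
          obtain ⟨k, hk⟩ := h2
          exact ⟨k, term_lt γ hγ u v k a b ha hb hab
            (huρ k) (hvρ k) (hεu k) (hεv k) (Or.inr (Or.inl hk))⟩
      · obtain ⟨k, hk⟩ := Function.ne_iff.mp h1
        exact ⟨k, term_lt γ hγ u v k a b ha hb hab
          (huρ k) (hvρ k) (hεu k) (hεv k) (Or.inl hk)⟩
    obtain ⟨k0, hk0⟩ := hstrict
    simp only [mathEntropy, smul_eq_mul, Finset.mul_sum, ← Finset.sum_add_distrib]
    exact Finset.sum_lt_sum (fun k _ => hle k) ⟨k0, Finset.mem_univ _, hk0⟩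
end

section
/- The block matrix Ĥ = [[𝒜, ℬ], [ℬᵀ, 𝒞]] defined by the multi-ion GLM-MHD dissipation operator is symmetric positive definite, given that all logarithmic-mean densities ρ_k^ln > 0, all mean pressures p̄_k > 0, all p_k* > 0, τ⁺ > 0, and γ_k > 1. -/
open Matrix

/-- The hydrodynamic 5×5 block `A_k` of the multi-ion GLM-MHD dissipation
matrix, with density `ρ` (log mean), pressure mean `p̄`, pressure `p*`,
heat capacity ratio `γ`, energy mean `Ē`, magnetic energy `Ē_mag²` and
velocity mean `v`. -/
noncomputable def Ablock (ρ pbar pstar γ Ebar Emag2 : ℝ) (v : Fin 3 → ℝ) :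
    Matrix (Fin 5) (Fin 5) ℝ :=
  !![ρ, ρ * v 0, ρ * v 1, ρ * v 2, Ebar;
     ρ * v 0, ρ * v 0 * v 0 + pbar, ρ * v 0 * v 1, ρ * v 0 * v 2,
       (Ebar + pbar) * v 0;
     ρ * v 1, ρ * v 1 * v 0, ρ * v 1 * v 1 + pbar, ρ * v 1 * v 2,
       (Ebar + pbar) * v 1;
     ρ * v 2, ρ * v 2 * v 0, ρ * v 2 * v 1, ρ * v 2 * v 2 + pbar,
       (Ebar + pbar) * v 2;
     Ebar, (Ebar + pbar) * v 0, (Ebar + pbar) * v 1, (Ebar + pbar) * v 2,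
       (1 / ρ) * (pstar ^ 2 / (γ - 1) + Ebar ^ 2)
         + pbar * (v 0 ^ 2 + v 1 ^ 2 + v 2 ^ 2) + Emag2]

/-- The GLM block vector `(⟨B₁⟩, ⟨B₂⟩, ⟨B₃⟩, ⟨ψ⟩)`. -/
def bvec (Bavg : Fin 3 → ℝ) (ψ : ℝ) : Fin 4 → ℝ := ![Bavg 0, Bavg 1, Bavg 2, ψ]

/-- The full dissipation matrix `Ĥ = [[𝒜, ℬ], [ℬᵀ, 𝒞]]` of the multi-ion
GLM-MHD system: `𝒜` has diagonal blocks `A_k` and off-diagonal blocks with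
single `(5,5)` entry `Ē_mag²`; `ℬ` consists of stacked blocks whose only
nonzero row is `(τ⁺⟨B₁⟩, τ⁺⟨B₂⟩, τ⁺⟨B₃⟩, τ⁺⟨ψ⟩)`; `𝒞 = τ⁺I₄`. -/
noncomputable def Hhat (N : ℕ) (ρln pbar pstar γ Ebar : Fin N → ℝ)
    (v : Fin N → Fin 3 → ℝ) (τ : ℝ) (Bavg : Fin 3 → ℝ) (ψ : ℝ) :
    Matrix ((Fin N × Fin 5) ⊕ Fin 4) ((Fin N × Fin 5) ⊕ Fin 4) ℝ :=
  let Emag2 : ℝ := τ * ((∑ i, (Bavg i) ^ 2) + ψ ^ 2)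
  fun i j =>
    match i, j with
    | Sum.inl (k, m), Sum.inl (l, n) =>
        if k = l then Ablock (ρln k) (pbar k) (pstar k) (γ k) (Ebar k) Emag2 (v k) m n
        else if m = 4 ∧ n = 4 then Emag2 else 0
    | Sum.inl (_, m), Sum.inr c => if m = 4 then τ * bvec Bavg ψ c else 0
    | Sum.inr c, Sum.inl (_, m) => if m = 4 then τ * bvec Bavg ψ c else 0
    | Sum.inr c, Sum.inr d => if c = d then τ else 0

lemma Ablock_quad (ρ pbar pstar γ Ebar : ℝ) (v : Fin 3 → ℝ) (hρ : 0 < ρ) (hγ : 1 < γ)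
    (w : Fin 5 → ℝ) :
    w ⬝ᵥ (Ablock ρ pbar pstar γ Ebar 0 v) *ᵥ w =
      ρ * (w 0 + v 0 * w 1 + v 1 * w 2 + v 2 * w 3 + (Ebar / ρ) * w 4) ^ 2
      + pbar * ((w 1 + v 0 * w 4) ^ 2 + (w 2 + v 1 * w 4) ^ 2 + (w 3 + v 2 * w 4) ^ 2)
      + (pstar ^ 2 / ((γ - 1) * ρ)) * (w 4) ^ 2 := by
  have h1 : ρ ≠ 0 := hρ.ne'
  have h2 : γ - 1 ≠ 0 := by nlinarith
  simp only [Ablock, dotProduct, mulVec, Fin.sum_univ_five]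
  simp [Fin.isValue]
  field_simp
  ring

lemma Ablock_quad_pos (ρ pbar pstar γ Ebar : ℝ) (v : Fin 3 → ℝ)
    (hρ : 0 < ρ) (hp : 0 < pbar) (hps : 0 < pstar) (hγ : 1 < γ)
    (w : Fin 5 → ℝ) (hw : w ≠ 0) :
    0 < w ⬝ᵥ (Ablock ρ pbar pstar γ Ebar 0 v) *ᵥ w := by
  have sqpos : ∀ a : ℝ, a ≠ 0 → 0 < a ^ 2 := fun a ha =>
    (sq_nonneg a).lt_of_ne (Ne.symm (pow_ne_zero 2 ha))
  rw [Ablock_quad ρ pbar pstar γ Ebar v hρ hγ w]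
  have hγ' : (0:ℝ) < γ - 1 := by linarith
  have hq : 0 < pstar ^ 2 / ((γ - 1) * ρ) := by positivity
  have hA : 0 ≤ ρ * (w 0 + v 0 * w 1 + v 1 * w 2 + v 2 * w 3 + (Ebar / ρ) * w 4) ^ 2 :=
    mul_nonneg hρ.le (sq_nonneg _)
  have hB : 0 ≤ pbar * ((w 1 + v 0 * w 4) ^ 2 + (w 2 + v 1 * w 4) ^ 2 + (w 3 + v 2 * w 4) ^ 2) :=
    mul_nonneg hp.le (by positivity)
  have hC : 0 ≤ pstar ^ 2 / ((γ - 1) * ρ) * w 4 ^ 2 := mul_nonneg hq.le (sq_nonneg _)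
  by_cases h4 : w 4 = 0
  · have hBpos : (w 1 ≠ 0 ∨ w 2 ≠ 0 ∨ w 3 ≠ 0) →
        0 < pbar * ((w 1 + v 0 * w 4) ^ 2 + (w 2 + v 1 * w 4) ^ 2 + (w 3 + v 2 * w 4) ^ 2) := by
      intro h
      refine mul_pos hp ?_
      simp only [h4, mul_zero, add_zero]
      rcases h with h | h | h
      · have := sqpos _ h; nlinarith [sq_nonneg (w 2), sq_nonneg (w 3)]
      · have := sqpos _ h; nlinarith [sq_nonneg (w 1), sq_nonneg (w 3)]
      · have := sqpos _ h; nlinarith [sq_nonneg (w 1), sq_nonneg (w 2)]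
    by_cases h1 : w 1 = 0
    · by_cases h2 : w 2 = 0
      · by_cases h3 : w 3 = 0
        · have h0 : w 0 ≠ 0 := by
            intro h0
            apply hw
            funext i
            fin_cases i <;> simpa using by assumption
          have hApos : 0 < ρ * (w 0 + v 0 * w 1 + v 1 * w 2 + v 2 * w 3 + (Ebar / ρ) * w 4) ^ 2 := by
            refine mul_pos hρ (sqpos _ ?_)
            rw [h1, h2, h3, h4]
            simpa using h0
          linarith
        · have := hBpos (Or.inr (Or.inr h3)); linarith
      · have := hBpos (Or.inr (Or.inl h2)); linarith
    · have := hBpos (Or.inl h1); linarith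
  · have hCpos : 0 < pstar ^ 2 / ((γ - 1) * ρ) * w 4 ^ 2 := mul_pos hq (sqpos _ h4)
    linarith

lemma Ablock_quad_nonneg (ρ pbar pstar γ Ebar : ℝ) (v : Fin 3 → ℝ)
    (hρ : 0 < ρ) (hp : 0 < pbar) (hps : 0 < pstar) (hγ : 1 < γ)
    (w : Fin 5 → ℝ) :
    0 ≤ w ⬝ᵥ (Ablock ρ pbar pstar γ Ebar 0 v) *ᵥ w := by
  rcases eq_or_ne w 0 with rfl | hw
  · simp
  · exact (Ablock_quad_pos ρ pbar pstar γ Ebar v hρ hp hps hγ w hw).le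

lemma Ablock_symm (ρ pbar pstar γ Ebar E : ℝ) (v : Fin 3 → ℝ) (m n : Fin 5) :
    Ablock ρ pbar pstar γ Ebar E v n m = Ablock ρ pbar pstar γ Ebar E v m n := by
  fin_cases m <;> fin_cases n <;> simp [Ablock] <;> ring

lemma Ablock_split (ρ pbar pstar γ Ebar E : ℝ) (v : Fin 3 → ℝ) (m n : Fin 5) :
    Ablock ρ pbar pstar γ Ebar E v m n =
      Ablock ρ pbar pstar γ Ebar 0 v m n + (if m = 4 ∧ n = 4 then E else 0) := by
  fin_cases m <;> fin_cases n <;> simp [Ablock]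

def uvec (N : ℕ) (Bavg : Fin 3 → ℝ) (ψ : ℝ) (c : Fin 4) :
    (Fin N × Fin 5) ⊕ Fin 4 → ℝ :=
  fun i => match i with
  | Sum.inl (_, m) => if m = 4 then bvec Bavg ψ c else 0
  | Sum.inr d => if c = d then 1 else 0

noncomputable def M1mat (N : ℕ) (A : Fin N → Matrix (Fin 5) (Fin 5) ℝ) :
    Matrix ((Fin N × Fin 5) ⊕ Fin 4) ((Fin N × Fin 5) ⊕ Fin 4) ℝ :=
  fun i j => match i, j with
  | Sum.inl (k, m), Sum.inl (l, n) => if k = l then A k m n else 0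
  | _, _ => 0

noncomputable def M2mat (N : ℕ) (τ : ℝ) (Bavg : Fin 3 → ℝ) (ψ : ℝ) :
    Matrix ((Fin N × Fin 5) ⊕ Fin 4) ((Fin N × Fin 5) ⊕ Fin 4) ℝ :=
  fun i j => τ * ∑ c, uvec N Bavg ψ c i * uvec N Bavg ψ c j

lemma quad_M1 (N : ℕ) (A : Fin N → Matrix (Fin 5) (Fin 5) ℝ)
    (x : (Fin N × Fin 5) ⊕ Fin 4 → ℝ) :
    x ⬝ᵥ (M1mat N A) *ᵥ x =
      ∑ k, (fun m => x (Sum.inl (k, m))) ⬝ᵥ (A k) *ᵥ (fun m => x (Sum.inl (k, m))) := by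
  simp only [dotProduct, mulVec, M1mat, Fintype.sum_sum_type, Fintype.sum_prod_type,
    ite_mul, zero_mul, mul_zero, Finset.sum_const_zero, add_zero, zero_add,
    mul_ite]
  refine Finset.sum_congr rfl fun k _ => Finset.sum_congr rfl fun m _ => ?_
  congr 1
  rw [Finset.sum_comm]
  simp [Finset.sum_ite_eq]

lemma quad_M2 (N : ℕ) (τ : ℝ) (Bavg : Fin 3 → ℝ) (ψ : ℝ)
    (x : (Fin N × Fin 5) ⊕ Fin 4 → ℝ) :
    x ⬝ᵥ (M2mat N τ Bavg ψ) *ᵥ x = τ * ∑ c, (uvec N Bavg ψ c ⬝ᵥ x) ^ 2 := by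
  have h : ∀ i, ((M2mat N τ Bavg ψ) *ᵥ x) i =
      τ * ∑ c, uvec N Bavg ψ c i * (uvec N Bavg ψ c ⬝ᵥ x) := by
    intro i
    simp only [mulVec, M2mat, dotProduct, Finset.sum_mul, Finset.mul_sum, mul_assoc]
    rw [Finset.sum_comm]
  simp only [dotProduct, h, Finset.mul_sum]
  rw [Finset.sum_comm]
  refine Finset.sum_congr rfl fun c _ => ?_
  simp only [dotProduct, Finset.mul_sum, Finset.sum_mul, sq]
  refine Finset.sum_congr rfl fun i _ => ?_
  exact Finset.sum_congr rfl fun j _ => by ring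

lemma uvec_dot_of_inl_zero (N : ℕ) (Bavg : Fin 3 → ℝ) (ψ : ℝ) (c : Fin 4)
    (x : (Fin N × Fin 5) ⊕ Fin 4 → ℝ) (hx : ∀ k m, x (Sum.inl (k, m)) = 0) :
    uvec N Bavg ψ c ⬝ᵥ x = x (Sum.inr c) := by
  simp only [dotProduct, Fintype.sum_sum_type, Fintype.sum_prod_type, uvec]
  simp [hx, Finset.sum_ite_eq]

lemma Hhat_split (N : ℕ) (ρln pbar pstar γ Ebar : Fin N → ℝ)
    (v : Fin N → Fin 3 → ℝ) (τ : ℝ) (Bavg : Fin 3 → ℝ) (ψ : ℝ) :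
    Hhat N ρln pbar pstar γ Ebar v τ Bavg ψ =
      M1mat N (fun k => Ablock (ρln k) (pbar k) (pstar k) (γ k) (Ebar k) 0 (v k))
      + M2mat N τ Bavg ψ := by
  ext i j
  rcases i with ⟨k, m⟩ | c <;> rcases j with ⟨l, n⟩ | d <;>
    simp only [Hhat, M1mat, M2mat, uvec, Matrix.add_apply, Fin.sum_univ_four]
  · rcases eq_or_ne k l with hkl | hkl
    · subst hkl
      simp only [if_pos rfl]
      rw [Ablock_split]
      by_cases hm : m = 4 <;> by_cases hn : n = 4 <;>
        simp [hm, hn, bvec, Fin.sum_univ_three] <;> (first | exact Or.inl (by ring) | ring1)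
    · simp only [if_neg hkl]
      by_cases hm : m = 4 <;> by_cases hn : n = 4 <;>
        simp [hm, hn, bvec, Fin.sum_univ_three] <;> (first | exact Or.inl (by ring) | ring1)
  · by_cases hm : m = 4 <;> fin_cases d <;> simp [hm, bvec]
  · by_cases hn : n = 4 <;> fin_cases c <;> simp [hn, bvec]
  · by_cases hcd : c = d
    · subst hcd; fin_cases c <;> simp
    · fin_cases c <;> fin_cases d <;> simp_all

lemma Hhat_isHermitian (N : ℕ) (ρln pbar pstar γ Ebar : Fin N → ℝ)
    (v : Fin N → Fin 3 → ℝ) (τ : ℝ) (Bavg : Fin 3 → ℝ) (ψ : ℝ) :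
    (Hhat N ρln pbar pstar γ Ebar v τ Bavg ψ).IsHermitian := by
  rw [Matrix.IsHermitian]
  ext i j
  rw [Matrix.conjTranspose_apply, star_trivial]
  rcases i with ⟨k, m⟩ | c <;> rcases j with ⟨l, n⟩ | d <;>
    simp only [Matrix.conjTranspose_apply, star_trivial, Hhat]
  · rcases eq_or_ne k l with hkl | hkl
    · subst hkl
      simp only [if_pos rfl]
      exact Ablock_symm _ _ _ _ _ _ _ m n
    · simp only [if_neg hkl, if_neg (Ne.symm hkl)]
      exact if_congr and_comm rfl rfl
  · rcases eq_or_ne c d with rfl | hcd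
    · rfl
    · simp [hcd, Ne.symm hcd]

/-- The dissipation matrix `Ĥ` of the multi-ion GLM-MHD system is symmetric
positive definite whenever all `ρ_k^ln > 0`, `p̄_k > 0`, `p_k* > 0`,
`γ_k > 1`, `τ⁺ > 0`, and `Ē_k = p_k*/(γ_k−1) + ½ρ_k^ln‖v_k‖̄²`. -/
theorem Hhat_posDef (N : ℕ) (hN : 1 ≤ N)
    (ρln pbar pstar γ Ebar vbar2 : Fin N → ℝ) (v : Fin N → Fin 3 → ℝ)
    (τ : ℝ) (Bavg : Fin 3 → ℝ) (ψ : ℝ)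
    (hρ : ∀ k, 0 < ρln k) (hp : ∀ k, 0 < pbar k) (hps : ∀ k, 0 < pstar k)
    (hγ : ∀ k, 1 < γ k) (hτ : 0 < τ)
    (hE : ∀ k, Ebar k = pstar k / (γ k - 1) + (1 / 2) * ρln k * vbar2 k) :
    (Hhat N ρln pbar pstar γ Ebar v τ Bavg ψ).PosDef := by
  refine Matrix.PosDef.of_dotProduct_mulVec_pos (Hhat_isHermitian N ρln pbar pstar γ Ebar v τ Bavg ψ) fun x hx => ?_
  have hstar : star x = x := by funext i; exact star_trivial _
  rw [hstar, Hhat_split, Matrix.add_mulVec, dotProduct_add,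
    quad_M1 N _ x, quad_M2 N τ Bavg ψ x]
  have hnn : ∀ l : Fin N, 0 ≤ (fun m => x (Sum.inl (l, m))) ⬝ᵥ
      (Ablock (ρln l) (pbar l) (pstar l) (γ l) (Ebar l) 0 (v l)) *ᵥ
      (fun m => x (Sum.inl (l, m))) :=
    fun l => Ablock_quad_nonneg _ _ _ _ _ _ (hρ l) (hp l) (hps l) (hγ l) _
  have h2 : 0 ≤ τ * ∑ c, (uvec N Bavg ψ c ⬝ᵥ x) ^ 2 :=
    mul_nonneg hτ.le (Finset.sum_nonneg fun c _ => sq_nonneg _)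
  by_cases hall : ∀ k m, x (Sum.inl (k, m)) = 0
  · have hc : ∃ c, x (Sum.inr c) ≠ 0 := by
      by_contra h
      push_neg at h
      apply hx
      funext i
      rcases i with ⟨k, m⟩ | c
      · exact hall k m
      · exact h c
    obtain ⟨c, hc⟩ := hc
    have hpos : 0 < τ * ∑ c, (uvec N Bavg ψ c ⬝ᵥ x) ^ 2 := by
      refine mul_pos hτ (Finset.sum_pos' (fun c _ => sq_nonneg _)
        ⟨c, Finset.mem_univ c, ?_⟩)
      rw [uvec_dot_of_inl_zero N Bavg ψ c x hall]
      exact (sq_nonneg _).lt_of_ne (Ne.symm (pow_ne_zero 2 hc))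
    have hz : (∑ k, (fun m => x (Sum.inl (k, m))) ⬝ᵥ
        (Ablock (ρln k) (pbar k) (pstar k) (γ k) (Ebar k) 0 (v k)) *ᵥ
        (fun m => x (Sum.inl (k, m)))) = 0 := by
      refine Finset.sum_eq_zero fun k _ => ?_
      have : (fun m => x (Sum.inl (k, m))) = (0 : Fin 5 → ℝ) := by
        funext m; exact hall k m
      rw [this]
      simp
    rw [hz]
    linarith
  · push_neg at hall
    obtain ⟨k, m, hkm⟩ := hall
    have hwk : (fun m => x (Sum.inl (k, m))) ≠ (0 : Fin 5 → ℝ) := by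
      intro h
      exact hkm (congrFun h m)
    have hterm : 0 < (fun m => x (Sum.inl (k, m))) ⬝ᵥ
        (Ablock (ρln k) (pbar k) (pstar k) (γ k) (Ebar k) 0 (v k)) *ᵥ
        (fun m => x (Sum.inl (k, m))) :=
      Ablock_quad_pos _ _ _ _ _ _ (hρ k) (hp k) (hps k) (hγ k) _ hwk
    have hsum : 0 < ∑ k, (fun m => x (Sum.inl (k, m))) ⬝ᵥ
        (Ablock (ρln k) (pbar k) (pstar k) (γ k) (Ebar k) 0 (v k)) *ᵥ
        (fun m => x (Sum.inl (k, m))) :=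
      Finset.sum_pos' (fun l _ => hnn l) ⟨k, Finset.mem_univ k, hterm⟩
    linarith
end
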